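/- For N even, let ι be the involution on bipartitions of N/2 sending (λ₁, λ₂, λ₃, λ₄, …) to (λ₂, λ₁, λ₄, λ₃, …). Then a bipartition λ of N/2 satisfies both λ ∈ BP^{N/2}_{0,4} and ι(λ) ∈ BP^{N/2}_{0,4} if and only if λ = ι(λ). In particular, the intersection of BP^{N/2}_{0,4} with any ι-orbit has at most one element. -/

import Mathlib

/-- A sequence of naturals that is eventually zero. -/
def EventuallyZero (l : ℕ → ℕ) : Prop := ∃ N, ∀ m, N ≤ m → l m = 0

/-- A bipartition: eventually zero, with `λ₁ ≥ λ₃ ≥ …` and `λ₂ ≥ λ₄ ≥ …`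
(0-indexed: `l i = λ_{i+1}`). -/
def IsBipartition (l : ℕ → ℕ) : Prop :=
  EventuallyZero l ∧ ∀ i, l (i + 2) ≤ l i

/-- A partition: eventually zero and weakly decreasing. -/
def IsPartitionSeq (l : ℕ → ℕ) : Prop :=
  EventuallyZero l ∧ ∀ i, l (i + 1) ≤ l i

/-- `λ` has excess `(e, e')`: `λᵢ + e ≥ λᵢ₊₁` for odd (paper) `i`,
`λᵢ + e' ≥ λᵢ₊₁` for even (paper) `i`.  With 0-based indices, paper-odd
positions are the even Lean indices. -/
def HasExcess (e e' : ℕ) (l : ℕ → ℕ) : Prop :=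
  ∀ i, (Even i → l (i + 1) ≤ l i + e) ∧ (Odd i → l (i + 1) ≤ l i + e')

/-- The (finite) sum of an eventually zero sequence is `n`. -/
def SumsTo (l : ℕ → ℕ) (n : ℕ) : Prop :=
  ∃ N, (∀ m, N ≤ m → l m = 0) ∧ ∑ i ∈ Finset.range N, l i = n


/-- The involution swapping the two rows of a bipartition:
(λ₁, λ₂, λ₃, λ₄, …) ↦ (λ₂, λ₁, λ₄, λ₃, …). -/
def iotaMap (l : ℕ → ℕ) : ℕ → ℕ := fun i => if i % 2 = 0 then l (i + 1) else l (i - 1)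

/-- A bipartition λ of N/2 satisfies λ ∈ BP^{N/2}_{0,4} and ι(λ) ∈ BP^{N/2}_{0,4}
if and only if λ = ι(λ). -/
theorem BP04_inter_iota_orbit (N : ℕ) (hN : Even N) (l : ℕ → ℕ)
    (hb : IsBipartition l) (hs : SumsTo l (N / 2)) :
    (HasExcess 0 4 l ∧ IsBipartition (iotaMap l) ∧ SumsTo (iotaMap l) (N / 2) ∧
      HasExcess 0 4 (iotaMap l)) ↔ l = iotaMap l := by
  constructor
  · rintro ⟨h1, _, _, h4⟩
    have key : ∀ i, i % 2 = 0 → l i = l (i + 1) := by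
      intro i hi
      have he : Even i := Nat.even_iff.mpr hi
      have a := (h1 i).1 he
      have b := (h4 i).1 he
      have h2 : (i + 1) % 2 = 1 := by omega
      simp only [iotaMap, hi, h2, if_true, Nat.add_sub_cancel] at b
      simp at b
      omega
    funext i
    rcases Nat.even_or_odd i with hi | hi
    · have h0 : i % 2 = 0 := Nat.even_iff.mp hi
      simp only [iotaMap, h0, if_pos rfl]
      exact key i h0
    · have h1' : i % 2 = 1 := Nat.odd_iff.mp hi
      have hi1 : 1 ≤ i := by omega
      simp only [iotaMap, h1']
      have : (i - 1) % 2 = 0 := by omega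
      have := key (i - 1) this
      have he : i - 1 + 1 = i := by omega
      rw [he] at this
      simp [this]
  · intro h
    have key : ∀ i, i % 2 = 0 → l i = l (i + 1) := by
      intro i hi
      have := congrFun h i
      simpa [iotaMap, hi] using this
    have hex : HasExcess 0 4 l := by
      intro i
      constructor
      · intro he
        have := key i (Nat.even_iff.mp he)
        omega
      · intro ho
        have h1 : (i + 1) % 2 = 0 := by
          have := Nat.odd_iff.mp ho; omega
        have hk := key (i + 1) h1
        rw [show i + 1 + 1 = i + 2 by ring] at hk
        have := hb.2 i
        omega
    exact ⟨hex, by rw [← h]; exact hb, by rw [← h]; exact hs, by rw [← h]; exact hex⟩
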